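/- A nonzero ordinal ξ has the following property if and only if ξ is additively indecomposable (i.e., there do not exist α, β < ξ with α + β ≥ ξ; equivalently ξ = ω^η for some ordinal η): for every tree P with rank(P) = ξ, every k < ω, and every function f : P → {0,…,k}, there exists a subtree Q of P with rank(Q) = rank(P) such that f is constant on Q. -/

import Mathlib

open Ordinal Set

universe u

/-- The set of maximal elements ("leaves") of `P`. -/
def treeLeaves {α : Type u} [PartialOrder α] (P : Set α) : Set α :=
  {t ∈ P | ∀ s ∈ P, ¬ t < s}

/-- The derivative `P' = P \ Leaves P`. -/
def treeDeriv {α : Type u} [PartialOrder α] (P : Set α) : Set α :=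
  P \ treeLeaves P

/-- The transfinite iterated derivative `P^ξ`. -/
noncomputable def derivIter {α : Type u} [PartialOrder α] (P : Set α) (ξ : Ordinal.{u}) :
    Set α :=
  Ordinal.limitRecOn ξ P (fun _ ih => treeDeriv ih)
    (fun o _ ih => ⋂ (ζ : Set.Iio o), ih ζ.1 ζ.2)

/-- `P` is a tree: every ancestor set is well-ordered (a well-founded chain). -/
def IsTree {α : Type u} [PartialOrder α] (P : Set α) : Prop :=
  ∀ t ∈ P, IsChain (· ≤ ·) {s ∈ P | s ≤ t} ∧ {s ∈ P | s ≤ t}.WellFoundedOn (· < ·)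

/-- `P` is well-founded: some transfinite derivative is empty. -/
def IsWFTree {α : Type u} [PartialOrder α] (P : Set α) : Prop :=
  ∃ ξ : Ordinal.{u}, derivIter P ξ = ∅

/-- The rank of a well-founded tree: the least `ξ` with `P^ξ = ∅`. -/
noncomputable def treeRank {α : Type u} [PartialOrder α] (P : Set α) : Ordinal.{u} :=
  sInf {ξ | derivIter P ξ = ∅}

/-- `τ_P(t)`: the largest ordinal `ξ` with `t ∈ P^ξ`. -/
noncomputable def treeTau {α : Type u} [PartialOrder α] (P : Set α) (t : α) : Ordinal.{u} :=
  sSup {ξ | t ∈ derivIter P ξ}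

/-- `τ_{P,β}(t)`: the largest ordinal `ξ` with `t ∈ P^{β·ξ}`. -/
noncomputable def treeTauMul {α : Type u} [PartialOrder α] (P : Set α) (β : Ordinal.{u})
    (t : α) : Ordinal.{u} :=
  sSup {ξ | t ∈ derivIter P (β * ξ)}

/-- `alpProd ε i = ω^{ω^{ε 0}} · ⋯ · ω^{ω^{ε i}}`. -/
noncomputable def alpProd (ε : ℕ → Ordinal.{u}) : ℕ → Ordinal.{u}
  | 0 => omega0 ^ omega0 ^ ε 0
  | (i + 1) => alpProd ε i * omega0 ^ omega0 ^ ε (i + 1)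

/-- The separation function `ς_P` of a tree whose rank has decomposition
`ω^{ω^{ε 0}} ⋯ ω^{ω^{ε l}}`: the least `i` such that `s, t` lie in the same block
`P^{α_i·δ} \ P^{α_i·(δ+1)}` for some ordinal `δ`. -/
noncomputable def sep {α : Type u} [PartialOrder α] (P : Set α) (ε : ℕ → Ordinal.{u})
    (s t : α) : ℕ :=
  sInf {i : ℕ | ∃ δ : Ordinal.{u},
    s ∈ derivIter P (alpProd ε i * δ) \ derivIter P (alpProd ε i * (δ + 1)) ∧
    t ∈ derivIter P (alpProd ε i * δ) \ derivIter P (alpProd ε i * (δ + 1))}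

/-- `indProd ε A l = ω^{ω^{ε 0}·1_A(0)} ⋯ ω^{ω^{ε l}·1_A(l)}`. -/
noncomputable def indProd (ε : ℕ → Ordinal.{u}) (A : Set ℕ) : ℕ → Ordinal.{u}
  | 0 => omega0 ^ (omega0 ^ ε 0 * A.indicator (fun _ => (1 : Ordinal.{u})) 0)
  | (i + 1) => indProd ε A i *
      omega0 ^ (omega0 ^ ε (i + 1) * A.indicator (fun _ => (1 : Ordinal.{u})) (i + 1))

/-- `sumPow ε i = ω^{ε 0} + ⋯ + ω^{ε (i-1)}` (the partial sums `γ_i`). -/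
noncomputable def sumPow (ε : ℕ → Ordinal.{u}) : ℕ → Ordinal.{u}
  | 0 => 0
  | (i + 1) => sumPow ε i + omega0 ^ ε i

/-- `indSum ε A i = Σ_{n < i} 1_A(n)·ω^{ε n}`. -/
noncomputable def indSum (ε : ℕ → Ordinal.{u}) (A : Set ℕ) : ℕ → Ordinal.{u}
  | 0 => 0
  | (i + 1) => indSum ε A i + A.indicator (fun _ => (1 : Ordinal.{u})) i * omega0 ^ ε i


namespace Ordinal

/-- natural (Hessenberg) sum of ordinals -/
noncomputable def nadd (a b : Ordinal.{u}) : Ordinal.{u} :=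
  sInf {c | (∀ x < a, nadd x b < c) ∧ ∀ y < b, nadd a y < c}
termination_by (a, b)

infixl:65 " ♯ " => Ordinal.nadd

theorem nadd_set_nonempty (a b : Ordinal.{u}) :
    {c : Ordinal.{u} | (∀ x < a, x ♯ b < c) ∧ ∀ y < b, a ♯ y < c}.Nonempty := by
  obtain ⟨B, hB⟩ := Ordinal.bddAbove_of_small (s :=
    (fun x => x ♯ b) '' Set.Iio a ∪ (fun y => a ♯ y) '' Set.Iio b)
  refine ⟨Order.succ B, fun x hx => ?_, fun y hy => ?_⟩
  · exact Order.lt_succ_of_le (hB (Or.inl ⟨x, hx, rfl⟩))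
  · exact Order.lt_succ_of_le (hB (Or.inr ⟨y, hy, rfl⟩))

theorem nadd_mem (a b : Ordinal.{u}) :
    (∀ x < a, x ♯ b < a ♯ b) ∧ ∀ y < b, a ♯ y < a ♯ b := by
  have h := csInf_mem (nadd_set_nonempty a b)
  rw [nadd]
  exact h

theorem nadd_lt_nadd_right {b c : Ordinal.{u}} (h : b < c) (a : Ordinal.{u}) :
    b ♯ a < c ♯ a := (nadd_mem c a).1 b h

theorem nadd_lt_nadd_left {b c : Ordinal.{u}} (h : b < c) (a : Ordinal.{u}) :
    a ♯ b < a ♯ c := (nadd_mem a c).2 b h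

theorem nadd_le_iff {a b c : Ordinal.{u}} :
    b ♯ c ≤ a ↔ (∀ b' < b, b' ♯ c < a) ∧ ∀ c' < c, b ♯ c' < a := by
  constructor
  · intro h
    exact ⟨fun b' hb' => lt_of_lt_of_le (nadd_lt_nadd_right hb' c) h,
      fun c' hc' => lt_of_lt_of_le (nadd_lt_nadd_left hc' b) h⟩
  · intro h
    rw [nadd]
    exact csInf_le' h

theorem nadd_le_nadd_right {b c : Ordinal.{u}} (h : b ≤ c) (a : Ordinal.{u}) :
    b ♯ a ≤ c ♯ a :=
  (StrictMono.monotone fun _ _ h' => nadd_lt_nadd_right h' a) h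

theorem nadd_le_nadd_left {b c : Ordinal.{u}} (h : b ≤ c) (a : Ordinal.{u}) :
    a ♯ b ≤ a ♯ c :=
  (StrictMono.monotone fun _ _ h' => nadd_lt_nadd_left h' a) h

theorem nadd_le_nadd {a b c d : Ordinal.{u}} (h₁ : a ≤ b) (h₂ : c ≤ d) : a ♯ c ≤ b ♯ d :=
  le_trans (nadd_le_nadd_right h₁ c) (nadd_le_nadd_left h₂ b)

theorem nadd_lt_nadd {a b c d : Ordinal.{u}} (h₁ : a < b) (h₂ : c < d) : a ♯ c < b ♯ d :=
  lt_of_lt_of_le (nadd_lt_nadd_right h₁ c) (nadd_le_nadd_left h₂.le b)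

theorem nadd_lt_nadd_of_lt_of_le {a b c d : Ordinal.{u}} (h₁ : a < b) (h₂ : c ≤ d) :
    a ♯ c < b ♯ d :=
  lt_of_lt_of_le (nadd_lt_nadd_right h₁ c) (nadd_le_nadd_left h₂ b)

theorem nadd_lt_nadd_of_le_of_lt {a b c d : Ordinal.{u}} (h₁ : a ≤ b) (h₂ : c < d) :
    a ♯ c < b ♯ d :=
  lt_of_le_of_lt (nadd_le_nadd_right h₁ c) (nadd_lt_nadd_left h₂ b)

theorem nadd_comm : ∀ a b : Ordinal.{u}, a ♯ b = b ♯ a := by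
  intro a
  induction a using Ordinal.induction with
  | h a IHa =>
    intro b
    induction b using Ordinal.induction with
    | h b IHb =>
      apply le_antisymm
      · rw [nadd_le_iff]
        refine ⟨fun x hx => ?_, fun y hy => ?_⟩
        · rw [IHa x hx]; exact nadd_lt_nadd_left hx b
        · rw [IHb y hy]; exact nadd_lt_nadd_right hy a
      · rw [nadd_le_iff]
        refine ⟨fun y hy => ?_, fun x hx => ?_⟩
        · rw [← IHb y hy]; exact nadd_lt_nadd_left hy a
        · rw [← IHa x hx]; exact nadd_lt_nadd_right hx b

theorem nadd_zero (a : Ordinal.{u}) : a ♯ 0 = a := by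
  induction a using Ordinal.induction with
  | h a IH =>
    apply le_antisymm
    · rw [nadd_le_iff]
      refine ⟨fun x hx => by rw [IH x hx]; exact hx, fun y hy => absurd hy (not_lt_of_ge (show (0:Ordinal.{u}) ≤ y from zero_le))⟩
    · exact StrictMono.le_apply (f := fun x => x ♯ 0) fun _ _ h' => nadd_lt_nadd_right h' 0

theorem succ_nadd (a b : Ordinal.{u}) : Order.succ a ♯ b = Order.succ (a ♯ b) := by
  induction b using Ordinal.induction with
  | h b IH =>
    apply le_antisymm
    · rw [nadd_le_iff]
      refine ⟨fun x hx => ?_, fun y hy => ?_⟩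
      · exact Order.lt_succ_of_le (nadd_le_nadd_right (Order.lt_succ_iff.mp hx) b)
      · rw [IH y hy]; exact Order.succ_lt_succ (nadd_lt_nadd_left hy a)
    · exact Order.succ_le_of_lt (nadd_lt_nadd_right (Order.lt_succ a) b)

theorem nadd_succ (a b : Ordinal.{u}) : a ♯ Order.succ b = Order.succ (a ♯ b) := by
  rw [nadd_comm, succ_nadd, nadd_comm]

end Ordinal


variable {α : Type u} [PartialOrder α] {P Q R : Set α}

theorem mem_treeDeriv {t : α} : t ∈ treeDeriv P ↔ t ∈ P ∧ ∃ s ∈ P, t < s := by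
  unfold treeDeriv treeLeaves
  simp only [Set.mem_diff, Set.mem_setOf_eq]
  constructor
  · rintro ⟨h1, h2⟩
    refine ⟨h1, ?_⟩
    by_contra hs
    push_neg at hs
    exact h2 ⟨h1, hs⟩
  · rintro ⟨h1, s, hs, hts⟩
    exact ⟨h1, fun h => h.2 s hs hts⟩

theorem derivIter_zero : derivIter P 0 = P :=
  Ordinal.limitRecOn_zero ..

theorem derivIter_succ (ζ : Ordinal.{u}) :
    derivIter P (Order.succ ζ) = treeDeriv (derivIter P ζ) :=
  Ordinal.limitRecOn_succ ..

theorem derivIter_limit {o : Ordinal.{u}} (h : Order.IsSuccLimit o) :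
    derivIter P o = ⋂ (ζ : Set.Iio o), derivIter P ζ.1 :=
  Ordinal.limitRecOn_limit _ _ _ _ h

theorem derivIter_mono (h : Q ⊆ P) (ζ : Ordinal.{u}) : derivIter Q ζ ⊆ derivIter P ζ := by
  induction ζ using Ordinal.induction with
  | h ζ IH =>
    rcases Ordinal.zero_or_succ_or_isSuccLimit ζ with rfl | ⟨ζ₀, rfl⟩ | hl
    · rw [derivIter_zero, derivIter_zero]; exact h
    · rw [derivIter_succ, derivIter_succ]
      intro t ht
      rw [mem_treeDeriv] at ht ⊢
      obtain ⟨ht, s, hs, hts⟩ := ht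
      exact ⟨IH ζ₀ (Order.lt_succ ζ₀) ht, s, IH ζ₀ (Order.lt_succ ζ₀) hs, hts⟩
    · rw [derivIter_limit hl, derivIter_limit hl]
      exact Set.iInter_mono fun ζ' => IH ζ'.1 ζ'.2

theorem derivIter_antitone {ζ ζ' : Ordinal.{u}} (h : ζ ≤ ζ') :
    derivIter P ζ' ⊆ derivIter P ζ := by
  induction ζ' using Ordinal.induction with
  | h ζ' IH =>
    rcases eq_or_lt_of_le h with rfl | hlt
    · exact le_rfl
    rcases Ordinal.zero_or_succ_or_isSuccLimit ζ' with rfl | ⟨ζ₀, rfl⟩ | hl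
    · exact absurd hlt (not_lt_of_ge (show (0:Ordinal.{u}) ≤ ζ from zero_le))
    · rw [derivIter_succ]
      refine subset_trans ?_ (IH ζ₀ (Order.lt_succ ζ₀) (Order.lt_succ_iff.mp hlt))
      exact Set.diff_subset
    · rw [derivIter_limit hl]
      exact Set.iInter_subset (fun ζ'' : Set.Iio ζ' => derivIter P ζ''.1) ⟨ζ, hlt⟩

theorem derivIter_subset (ζ : Ordinal.{u}) : derivIter P ζ ⊆ P := by
  have := derivIter_antitone (P := P) (show (0:Ordinal.{u}) ≤ ζ from zero_le)
  rwa [derivIter_zero] at this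

theorem mem_derivIter_of_lt {s t : α} {ζ : Ordinal.{u}} (hs : s ∈ P)
    (ht : t ∈ derivIter P ζ) (hst : s < t) : s ∈ derivIter P ζ := by
  induction ζ using Ordinal.induction with
  | h ζ IH =>
    rcases Ordinal.zero_or_succ_or_isSuccLimit ζ with rfl | ⟨ζ₀, rfl⟩ | hl
    · rwa [derivIter_zero]
    · rw [derivIter_succ] at ht ⊢
      rw [mem_treeDeriv] at ht ⊢
      obtain ⟨ht, _⟩ := ht
      exact ⟨IH ζ₀ (Order.lt_succ ζ₀) ht, t, ht, hst⟩
    · rw [derivIter_limit hl] at ht ⊢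
      exact Set.mem_iInter.2 fun ζ' =>
        IH ζ'.1 ζ'.2 (Set.mem_iInter.1 ht ζ')

theorem derivIter_treeRank (h : IsWFTree P) : derivIter P (treeRank P) = ∅ :=
  csInf_mem h

theorem treeRank_le {ζ : Ordinal.{u}} (h : derivIter P ζ = ∅) : treeRank P ≤ ζ :=
  csInf_le' h

theorem derivIter_nonempty_of_lt_treeRank {ζ : Ordinal.{u}} (h : ζ < treeRank P) :
    (derivIter P ζ).Nonempty := by
  rw [Set.nonempty_iff_ne_empty]
  exact fun he => absurd (treeRank_le he) (not_le.2 h)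

theorem IsWFTree.subset (hQ : Q ⊆ P) (h : IsWFTree P) : IsWFTree Q := by
  obtain ⟨ξ, hξ⟩ := h
  exact ⟨ξ, Set.subset_empty_iff.1 (hξ ▸ derivIter_mono hQ ξ)⟩

theorem treeRank_mono (hQ : Q ⊆ P) (h : IsWFTree P) : treeRank Q ≤ treeRank P :=
  treeRank_le (Set.subset_empty_iff.1
    ((derivIter_treeRank h) ▸ derivIter_mono hQ (treeRank P)))

/-- bound on rank from a strictly decreasing ordinal labelling -/
theorem le_of_mem_derivIter {g : α → Ordinal.{u}}
    (hg : ∀ s ∈ Q, ∀ t ∈ Q, s < t → g t < g s) :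
    ∀ ζ : Ordinal.{u}, ∀ t ∈ derivIter Q ζ, ζ ≤ g t := by
  intro ζ
  induction ζ using Ordinal.induction with
  | h ζ IH =>
    intro t ht
    rcases Ordinal.zero_or_succ_or_isSuccLimit ζ with rfl | ⟨ζ₀, rfl⟩ | hl
    · exact zero_le
    · rw [derivIter_succ, mem_treeDeriv] at ht
      obtain ⟨ht, s, hs, hts⟩ := ht
      have h1 : ζ₀ ≤ g s := IH ζ₀ (Order.lt_succ ζ₀) s hs
      have h2 : g s < g t := by
        have hsQ : s ∈ Q := derivIter_subset _ hs
        have htQ : t ∈ Q := derivIter_subset _ ht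
        exact hg t htQ s hsQ hts
      exact Order.succ_le_of_lt (lt_of_le_of_lt h1 h2)
    · rw [derivIter_limit hl] at ht
      have : ∀ ζ' < ζ, ζ' < g t := by
        intro ζ' hζ'
        have h1 : Order.succ ζ' < ζ := hl.succ_lt hζ'
        have := IH _ h1 t (Set.mem_iInter.1 ht ⟨_, h1⟩)
        exact lt_of_lt_of_le (Order.lt_succ ζ') this
      by_contra hc
      exact absurd (this _ (not_le.1 hc)) (lt_irrefl _)

theorem derivIter_eq_empty_of_bound {g : α → Ordinal.{u}} {ρ : Ordinal.{u}}
    (hg : ∀ s ∈ Q, ∀ t ∈ Q, s < t → g t < g s) (hb : ∀ t ∈ Q, g t < ρ) :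
    derivIter Q ρ = ∅ := by
  rw [Set.eq_empty_iff_forall_notMem]
  intro t ht
  have h1 := le_of_mem_derivIter hg ρ t ht
  have h2 := hb t (derivIter_subset _ ht)
  exact absurd (lt_of_le_of_lt h1 h2) (lt_irrefl _)

/-- the root of a rooted set belongs to every nonempty derivative -/
theorem root_mem_derivIter {t : α} (ht : t ∈ Q) (hmin : ∀ x ∈ Q, t ≤ x)
    {ζ : Ordinal.{u}} (h : (derivIter Q ζ).Nonempty) : t ∈ derivIter Q ζ := by
  obtain ⟨x, hx⟩ := h
  rcases eq_or_lt_of_le (hmin x (derivIter_subset _ hx)) with rfl | hlt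
  · exact hx
  · exact mem_derivIter_of_lt ht hx hlt

theorem treeRank_isSucc {t : α} (ht : t ∈ Q) (hmin : ∀ x ∈ Q, t ≤ x)
    (hWF : IsWFTree Q) : ∃ σ : Ordinal.{u}, treeRank Q = Order.succ σ := by
  rcases Ordinal.zero_or_succ_or_isSuccLimit (treeRank Q) with h0 | hs | hl
  · exfalso
    have := derivIter_treeRank hWF
    rw [h0, derivIter_zero] at this
    exact absurd (this ▸ ht) (Set.notMem_empty t)
  · obtain ⟨σ, hσ⟩ := hs
    exact ⟨σ, hσ.symm⟩
  · exfalso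
    have hmem : t ∈ derivIter Q (treeRank Q) := by
      rw [derivIter_limit hl]
      refine Set.mem_iInter.2 fun ζ' => ?_
      exact root_mem_derivIter ht hmin (derivIter_nonempty_of_lt_treeRank ζ'.2)
    rw [derivIter_treeRank hWF] at hmem
    exact absurd hmem (Set.notMem_empty t)

/-- strict decrease of local rank above elements of `Q` -/
theorem nu_strict (hWF : IsWFTree Q) {s t : α} (ht : t ∈ Q) (hst : t < s) :
    treeRank (Q ∩ {x | s ≤ x}) < treeRank (Q ∩ {x | t ≤ x}) := by
  set ρ := treeRank (Q ∩ {x | s ≤ x}) with hρ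
  have hsub : Q ∩ {x | s ≤ x} ⊆ Q ∩ {x | t ≤ x} := by
    rintro x ⟨hx1, hx2⟩
    exact ⟨hx1, le_trans (le_of_lt hst) hx2⟩
  have htQ : t ∈ Q ∩ {x | t ≤ x} := ⟨ht, le_rfl⟩
  -- t ∈ derivIter (Q∩≥t) ζ for all ζ ≤ ρ
  have key : ∀ ζ : Ordinal.{u}, ζ ≤ ρ → t ∈ derivIter (Q ∩ {x | t ≤ x}) ζ := by
    intro ζ
    induction ζ using Ordinal.induction with
    | h ζ IH =>
      intro hζρ
      rcases Ordinal.zero_or_succ_or_isSuccLimit ζ with rfl | ⟨ζ₀, rfl⟩ | hl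
      · rw [derivIter_zero]; exact htQ
      · have hζ₀ : ζ₀ < ρ := lt_of_lt_of_le (Order.lt_succ ζ₀) hζρ
        obtain ⟨x, hx⟩ := derivIter_nonempty_of_lt_treeRank hζ₀
        have hx' : x ∈ derivIter (Q ∩ {x | t ≤ x}) ζ₀ := derivIter_mono hsub ζ₀ hx
        have htx : t < x := lt_of_lt_of_le hst (derivIter_subset _ hx).2
        rw [derivIter_succ, mem_treeDeriv]
        exact ⟨IH ζ₀ (Order.lt_succ ζ₀) (le_of_lt hζ₀), x, hx', htx⟩
      · rw [derivIter_limit hl]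
        exact Set.mem_iInter.2 fun ζ' =>
          IH ζ'.1 ζ'.2 (le_trans (le_of_lt ζ'.2) hζρ)
  by_contra hc
  have hle : treeRank (Q ∩ {x | t ≤ x}) ≤ ρ := not_lt.1 hc
  have he : derivIter (Q ∩ {x | t ≤ x}) (treeRank (Q ∩ {x | t ≤ x})) = ∅ :=
    derivIter_treeRank (hWF.subset Set.inter_subset_left)
  have := derivIter_antitone (P := Q ∩ {x | t ≤ x}) hle (key ρ le_rfl)
  rw [he] at this
  exact absurd this (Set.notMem_empty t)

theorem W (δ : Ordinal.{u}) (hC : ∀ r s : Ordinal.{u}, r < omega0 ^ δ → s < omega0 ^ δ → r ♯ s < omega0 ^ δ) :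
    ∀ (k : ℕ) (c : Ordinal.{u}) (m n : ℕ), m + n = k → ∀ r s : Ordinal.{u},
      r < omega0 ^ δ → s < omega0 ^ δ → r ♯ s = c →
      (omega0 ^ δ * m + r) ♯ (omega0 ^ δ * n + s) ≤ omega0 ^ δ * (m + n : ℕ) + (r ♯ s) := by
  have hω : (omega0 ^ δ : Ordinal.{u}) ≠ 0 := opow_ne_zero δ omega0_ne_zero
  intro k
  induction k using Nat.strong_induction_on with
  | _ k IHk =>
    intro c
    induction c using Ordinal.induction with
    | h c IHc =>
      intro m n hk r s hr hs hc
      -- main inequality for one side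
      have side : ∀ (m n : ℕ) (r s : Ordinal.{u}), m + n = k → r < omega0 ^ δ →
          s < omega0 ^ δ → r ♯ s = c →
          ∀ x < omega0 ^ δ * m + r,
            x ♯ (omega0 ^ δ * n + s) < omega0 ^ δ * (m + n : ℕ) + (r ♯ s) := by
        intro m n r s hk hr hs hc x hx
        by_cases hxm : omega0 ^ δ * m ≤ x
        · set r' := x - omega0 ^ δ * m with hr'def
          have hxeq : x = omega0 ^ δ * m + r' := (Ordinal.add_sub_cancel_of_le hxm).symm
          have hr'r : r' < r := by
            by_contra hcon
            have h2 : omega0 ^ δ * m + r ≤ omega0 ^ δ * m + r' :=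
              add_le_add_right (not_lt.1 hcon) _
            rw [← hxeq] at h2
            exact absurd (lt_of_lt_of_le hx h2) (lt_irrefl x)
          have hr'ω : r' < omega0 ^ δ := lt_trans hr'r hr
          have hIH := IHc (r' ♯ s) (hc ▸ Ordinal.nadd_lt_nadd_right hr'r s) m n hk r' s
            hr'ω hs rfl
          calc x ♯ (omega0 ^ δ * n + s)
              = (omega0 ^ δ * m + r') ♯ (omega0 ^ δ * n + s) := by rw [← hxeq]
            _ ≤ omega0 ^ δ * (m + n : ℕ) + (r' ♯ s) := hIH
            _ < omega0 ^ δ * (m + n : ℕ) + (r ♯ s) :=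
                add_lt_add_right (Ordinal.nadd_lt_nadd_right hr'r s) _
        · have hxm' : x < omega0 ^ δ * m := not_le.1 hxm
          have hrem : x % omega0 ^ δ < omega0 ^ δ := Ordinal.mod_lt x hω
          have hqm : x / omega0 ^ δ < (m : Ordinal) := (Ordinal.div_lt hω).2 hxm'
          obtain ⟨m', hm'⟩ := Ordinal.lt_omega0.1 (hqm.trans (nat_lt_omega0 m))
          have hm'm : m' < m := by
            rw [hm'] at hqm
            exact_mod_cast hqm
          have hxeq : x = omega0 ^ δ * m' + x % omega0 ^ δ := by
            conv_lhs => rw [← Ordinal.div_add_mod x (omega0 ^ δ)]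
            rw [hm']
          have hIH := IHk (m' + n) (by omega) (x % omega0 ^ δ ♯ s) m' n rfl
            (x % omega0 ^ δ) s hrem hs rfl
          calc x ♯ (omega0 ^ δ * n + s)
              = (omega0 ^ δ * m' + x % omega0 ^ δ) ♯ (omega0 ^ δ * n + s) := by rw [← hxeq]
            _ ≤ omega0 ^ δ * (m' + n : ℕ) + (x % omega0 ^ δ ♯ s) := hIH
            _ < omega0 ^ δ * (m' + n : ℕ) + omega0 ^ δ :=
                add_lt_add_right (hC _ _ hrem hs) _
            _ = omega0 ^ δ * ((m' + n : ℕ) + 1) := by rw [mul_add_one]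
            _ ≤ omega0 ^ δ * (m + n : ℕ) := by
                apply mul_le_mul_right
                exact_mod_cast Nat.succ_le_of_lt (by omega)
            _ ≤ omega0 ^ δ * (m + n : ℕ) + (r ♯ s) := le_self_add
      rw [Ordinal.nadd_le_iff]
      constructor
      · exact side m n r s hk hr hs hc
      · intro x hx
        have := side n m s r (by omega) hs hr (hc ▸ Ordinal.nadd_comm s r) x hx
        rw [Ordinal.nadd_comm x, Ordinal.nadd_comm s r] at this
        calc (omega0 ^ δ * m + r) ♯ x < omega0 ^ δ * (n + m : ℕ) + (r ♯ s) := this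
          _ = omega0 ^ δ * (m + n : ℕ) + (r ♯ s) := by rw [Nat.add_comm n m]

theorem nadd_lt_opow : ∀ δ : Ordinal.{u}, ∀ a b : Ordinal.{u},
    a < omega0 ^ δ → b < omega0 ^ δ → a ♯ b < omega0 ^ δ := by
  intro δ
  induction δ using Ordinal.induction with
  | h δ IH =>
    intro a b ha hb
    rcases Ordinal.zero_or_succ_or_isSuccLimit δ with rfl | ⟨δ₀, rfl⟩ | hl
    · rw [opow_zero] at ha hb ⊢
      rw [Ordinal.lt_one_iff_zero] at ha hb
      rw [ha, hb, Ordinal.nadd_zero]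
      exact zero_lt_one
    · have hC := IH δ₀ (Order.lt_succ δ₀)
      rw [opow_succ] at ha hb ⊢
      obtain ⟨ma, hma, hma'⟩ := (lt_mul_iff_of_isSuccLimit isSuccLimit_omega0).1 ha
      obtain ⟨nb, hnb, hnb'⟩ := (lt_mul_iff_of_isSuccLimit isSuccLimit_omega0).1 hb
      obtain ⟨m, rfl⟩ := Ordinal.lt_omega0.1 hma
      obtain ⟨n, rfl⟩ := Ordinal.lt_omega0.1 hnb
      have h1 : a ♯ b < (omega0 ^ δ₀ * m) ♯ (omega0 ^ δ₀ * n) :=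
        Ordinal.nadd_lt_nadd hma' hnb'
      have h2 : (omega0 ^ δ₀ * m) ♯ (omega0 ^ δ₀ * n) ≤ omega0 ^ δ₀ * (m + n : ℕ) := by
        have := W δ₀ hC (m + n) 0 m n rfl 0 0
          (Ordinal.opow_pos δ₀ omega0_pos) (Ordinal.opow_pos δ₀ omega0_pos)
          (by rw [Ordinal.nadd_zero])
        simpa [Ordinal.nadd_zero] using this
      have h3 : omega0 ^ δ₀ * (m + n : ℕ) < omega0 ^ δ₀ * omega0 :=
        mul_lt_mul_of_pos_left (nat_lt_omega0 (m + n)) (Ordinal.opow_pos δ₀ omega0_pos)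
      exact lt_of_lt_of_le (lt_of_lt_of_le h1 h2) (le_of_lt h3)
    · obtain ⟨γa, hγa, hγa'⟩ := (lt_opow_of_isSuccLimit omega0_ne_zero hl).1 ha
      obtain ⟨γb, hγb, hγb'⟩ := (lt_opow_of_isSuccLimit omega0_ne_zero hl).1 hb
      set γ := max γa γb with hγ
      have hγδ : γ < δ := max_lt hγa hγb
      have h1 : a < omega0 ^ γ :=
        lt_of_lt_of_le hγa' (opow_le_opow_right omega0_pos (le_max_left _ _))
      have h2 : b < omega0 ^ γ :=
        lt_of_lt_of_le hγb' (opow_le_opow_right omega0_pos (le_max_right _ _))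
      exact lt_of_lt_of_le (IH γ hγδ a b h1 h2)
        (opow_le_opow_right omega0_pos (le_of_lt hγδ))

theorem nadd_lt_of_principal {ξ a b : Ordinal.{u}} (hξ : ξ ≠ 0)
    (hp : ∀ x < ξ, ∀ y < ξ, x + y < ξ) (ha : a < ξ) (hb : b < ξ) : a ♯ b < ξ := by
  have hP : Ordinal.IsPrincipal (· + ·) ξ := fun x y hx hy => hp x hx y hy
  rcases Ordinal.principal_add_iff_zero_or_omega0_opow.1 hP with rfl | ⟨δ, rfl⟩
  · exact absurd rfl hξ
  · exact nadd_lt_opow δ a b ha hb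

/-- key: tau bound on unions -/
theorem tau_bound (hWF : IsWFTree (Q ∪ R)) :
    ∀ c : Ordinal.{u}, ∀ t ∈ derivIter (Q ∪ R) c,
      c < treeRank (Q ∩ {x | t ≤ x}) ♯ treeRank (R ∩ {x | t ≤ x}) := by
  have hWQ : IsWFTree Q := hWF.subset Set.subset_union_left
  have hWR : IsWFTree R := hWF.subset Set.subset_union_right
  intro c
  induction c using Ordinal.induction with
  | h c IH =>
    intro t ht
    have htU : t ∈ Q ∪ R := derivIter_subset _ ht
    set D := treeRank (Q ∩ {x | t ≤ x}) ♯ treeRank (R ∩ {x | t ≤ x}) with hD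
    have hDsucc : ∃ d, D = Order.succ d := by
      rcases htU with htQ | htR
      · obtain ⟨σ, hσ⟩ := treeRank_isSucc (Q := Q ∩ {x | t ≤ x}) ⟨htQ, le_rfl⟩
          (fun x hx => hx.2) (hWQ.subset Set.inter_subset_left)
        exact ⟨σ ♯ treeRank (R ∩ {x | t ≤ x}), by rw [hD, hσ, Ordinal.succ_nadd]⟩
      · obtain ⟨σ, hσ⟩ := treeRank_isSucc (Q := R ∩ {x | t ≤ x}) ⟨htR, le_rfl⟩
          (fun x hx => hx.2) (hWR.subset Set.inter_subset_left)
        exact ⟨treeRank (Q ∩ {x | t ≤ x}) ♯ σ, by rw [hD, hσ, Ordinal.nadd_succ]⟩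
    obtain ⟨d, hd⟩ := hDsucc
    rcases Ordinal.zero_or_succ_or_isSuccLimit c with rfl | ⟨c₀, rfl⟩ | hl
    · rw [hd]
      exact lt_of_le_of_lt (show (0:Ordinal.{u}) ≤ d from zero_le) (Order.lt_succ d)
    · rw [derivIter_succ, mem_treeDeriv] at ht
      obtain ⟨ht', s, hs, hts⟩ := ht
      have hIH : c₀ < treeRank (Q ∩ {x | s ≤ x}) ♯ treeRank (R ∩ {x | s ≤ x}) :=
        IH c₀ (Order.lt_succ c₀) s hs
      have hE : treeRank (Q ∩ {x | s ≤ x}) ♯ treeRank (R ∩ {x | s ≤ x}) < D := by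
        have hsubQ : Q ∩ {x | s ≤ x} ⊆ Q ∩ {x | t ≤ x} := fun x hx =>
          ⟨hx.1, le_trans (le_of_lt hts) hx.2⟩
        have hsubR : R ∩ {x | s ≤ x} ⊆ R ∩ {x | t ≤ x} := fun x hx =>
          ⟨hx.1, le_trans (le_of_lt hts) hx.2⟩
        rcases htU with htQ | htR
        · exact Ordinal.nadd_lt_nadd_of_lt_of_le (nu_strict hWQ htQ hts)
            (treeRank_mono hsubR (hWR.subset Set.inter_subset_left))
        · exact Ordinal.nadd_lt_nadd_of_le_of_lt
            (treeRank_mono hsubQ (hWQ.subset Set.inter_subset_left))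
            (nu_strict hWR htR hts)
      exact lt_of_le_of_lt (Order.succ_le_of_lt hIH) hE
    · have hcD : c ≤ D := by
        by_contra hc
        have hlt : D < c := not_le.1 hc
        have := IH D hlt t (derivIter_antitone (le_of_lt hlt) ht)
        exact absurd this (lt_irrefl D)
      rcases eq_or_lt_of_le hcD with rfl | h
      · exfalso
        rw [hd] at hl
        exact (Order.not_isSuccPrelimit_succ _) hl.isSuccPrelimit
      · exact h

theorem treeRank_union (hWF : IsWFTree (Q ∪ R)) :
    treeRank (Q ∪ R) ≤ treeRank Q ♯ treeRank R := by
  refine treeRank_le ?_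
  rw [Set.eq_empty_iff_forall_notMem]
  intro t ht
  have h1 := tau_bound hWF _ t ht
  have h2 : treeRank (Q ∩ {x | t ≤ x}) ♯ treeRank (R ∩ {x | t ≤ x}) ≤
      treeRank Q ♯ treeRank R :=
    Ordinal.nadd_le_nadd
      (treeRank_mono Set.inter_subset_left (hWF.subset Set.subset_union_left))
      (treeRank_mono Set.inter_subset_left (hWF.subset Set.subset_union_right))
  exact absurd (lt_of_lt_of_le h1 h2) (lt_irrefl _)

theorem treeRank_iUnion_lt {ξ : Ordinal.{u}} (hξ : ξ ≠ 0)
    (hp : ∀ x < ξ, ∀ y < ξ, x + y < ξ) (hWF : IsWFTree P) :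
    ∀ (n : ℕ) (F : Fin n → Set α), (∀ i, F i ⊆ P) → (∀ i, treeRank (F i) < ξ) →
      treeRank (⋃ i, F i) < ξ := by
  intro n
  induction n with
  | zero =>
    intro F _ _
    have he : (⋃ i : Fin 0, F i) = ∅ := by simp
    rw [he]
    have h0 : treeRank (∅ : Set α) = 0 := by
      apply le_antisymm _ zero_le
      exact treeRank_le (by rw [derivIter_zero])
    rw [h0]
    exact pos_iff_ne_zero.2 hξ
  | succ n IH =>
    intro F hsub hlt
    have hdecomp : (⋃ i, F i) = (⋃ i : Fin n, F i.castSucc) ∪ F (Fin.last n) := by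
      ext x
      simp only [Set.mem_iUnion, Set.mem_union]
      constructor
      · rintro ⟨i, hi⟩
        rcases Fin.eq_castSucc_or_eq_last i with ⟨j, rfl⟩ | rfl
        · exact Or.inl ⟨j, hi⟩
        · exact Or.inr hi
      · rintro (⟨j, hj⟩ | h)
        · exact ⟨j.castSucc, hj⟩
        · exact ⟨Fin.last n, h⟩
    rw [hdecomp]
    have hU1 : (⋃ i : Fin n, F i.castSucc) ⊆ P := Set.iUnion_subset fun i => hsub _
    have hWFu : IsWFTree ((⋃ i : Fin n, F i.castSucc) ∪ F (Fin.last n)) :=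
      hWF.subset (Set.union_subset hU1 (hsub _))
    have h1 : treeRank (⋃ i : Fin n, F i.castSucc) < ξ :=
      IH _ (fun i => hsub _) (fun i => hlt _)
    exact lt_of_le_of_lt (treeRank_union hWFu)
      (nadd_lt_of_principal hξ hp h1 (hlt _))

theorem forward_dir {ξ : Ordinal.{u}} (hξ : ξ ≠ 0)
    (hp : ∀ x < ξ, ∀ y < ξ, x + y < ξ) (hWF : IsWFTree P)
    (hrank : treeRank P = ξ) (k : ℕ) (f : α → Fin (k + 1)) :
    ∃ Q ⊆ P, treeRank Q = treeRank P ∧ ∃ c : Fin (k + 1), ∀ t ∈ Q, f t = c := by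
  by_cases hc : ∃ c : Fin (k + 1), treeRank (P ∩ f ⁻¹' {c}) = ξ
  · obtain ⟨c, hc⟩ := hc
    exact ⟨P ∩ f ⁻¹' {c}, Set.inter_subset_left, by rw [hc, hrank],
      c, fun t ht => ht.2⟩
  · exfalso
    push_neg at hc
    have hcover : (⋃ c : Fin (k + 1), P ∩ f ⁻¹' {c}) = P := by
      ext x
      simp only [Set.mem_iUnion, Set.mem_inter_iff, Set.mem_preimage,
        Set.mem_singleton_iff]
      exact ⟨fun ⟨c, h, _⟩ => h, fun h => ⟨f x, h, rfl⟩⟩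
    have hlt : ∀ c : Fin (k + 1), treeRank (P ∩ f ⁻¹' {c}) < ξ := fun c =>
      lt_of_le_of_ne (hrank ▸ treeRank_mono Set.inter_subset_left hWF) (hc c)
    have := treeRank_iUnion_lt hξ hp hWF (k + 1) (fun c => P ∩ f ⁻¹' {c})
      (fun c => Set.inter_subset_left) hlt
    rw [hcover, hrank] at this
    exact absurd this (lt_irrefl ξ)

noncomputable def tyin {o : Ordinal.{u}} (x : o.ToType) : Ordinal.{u} :=
  @Ordinal.typein o.ToType (· < ·) (isWellOrder_lt) x

noncomputable def enm {o : Ordinal.{u}} (ζ : Ordinal.{u}) (h : ζ < o) : o.ToType :=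
  @Ordinal.enum o.ToType (· < ·) (isWellOrder_lt) ⟨ζ, by rw [Ordinal.type_toType]; exact h⟩

theorem tyin_lt_self {o : Ordinal.{u}} (x : o.ToType) : tyin x < o := by
  have := @Ordinal.typein_lt_type o.ToType (· < ·) (isWellOrder_lt) x
  rwa [Ordinal.type_toType] at this

theorem tyin_enm {o : Ordinal.{u}} (ζ : Ordinal.{u}) (h : ζ < o) : tyin (enm ζ h) = ζ :=
  @Ordinal.typein_enum o.ToType (· < ·) (isWellOrder_lt) ζ
    (by rw [Ordinal.type_toType]; exact h)

theorem tyin_lt_tyin {o : Ordinal.{u}} (x y : o.ToType) : tyin x < tyin y ↔ x < y :=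
  @Ordinal.typein_lt_typein o.ToType (· < ·) (isWellOrder_lt) x y

/-- wrapper for lists carrying the (reverse-)suffix partial order -/
structure SL (β : Type u) : Type u where
  l : List β

theorem SL.ext' {β : Type u} {s t : SL β} (h : s.l = t.l) : s = t := by
  cases s; cases t; cases h; rfl

instance SL.partialOrder (β : Type u) : PartialOrder (SL β) where
  le s t := s.l <:+ t.l
  le_refl s := List.suffix_refl s.l
  le_trans _ _ _ h h' := List.IsSuffix.trans h h'
  le_antisymm _ _ h h' := SL.ext'
    (List.IsSuffix.eq_of_length h
      (Nat.le_antisymm (List.IsSuffix.length_le h) (List.IsSuffix.length_le h')))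

theorem SL.le_iff {β : Type u} {s t : SL β} : s ≤ t ↔ s.l <:+ t.l := Iff.rfl

theorem backward_dir {ξ : Ordinal.{u}} (hξ : ξ ≠ 0)
    (hex : ∃ a b : Ordinal.{u}, a < ξ ∧ b < ξ ∧ ξ ≤ a + b) :
    ¬ (∀ (α : Type u) [PartialOrder α] (P : Set α), IsTree P → IsWFTree P →
        treeRank P = ξ → ∀ (k : ℕ) (f : α → Fin (k + 1)),
          ∃ Q ⊆ P, treeRank Q = treeRank P ∧
            ∃ c : Fin (k + 1), ∀ t ∈ Q, f t = c) := by
  classical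
  intro hRHS
  obtain ⟨a, b, ha, hb, hab⟩ := hex
  set b' := ξ - a with hb'def
  have hξab : ξ = a + b' := (Ordinal.add_sub_cancel_of_le ha.le).symm
  have hb' : b' < ξ := lt_of_le_of_lt (Ordinal.sub_le.2 hab) hb
  set β := ξ.ToType with hβ
  haveI : Inhabited β := Classical.inhabited_of_nonempty
    (Ordinal.nonempty_toType_iff.2 hξ)
  let g : SL β → Ordinal.{u} := fun s => tyin s.l.headI
  let P : Set (SL β) := {s | s.l ≠ [] ∧ s.l.Chain' (· < ·)}
  -- g is strictly decreasing along <
  have hgP : ∀ s ∈ P, ∀ t ∈ P, s < t → g t < g s := by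
    rintro s ⟨hs0, _⟩ t ⟨ht0, htc⟩ hst
    obtain ⟨hsuf, hne⟩ := lt_iff_le_and_ne.1 hst
    obtain ⟨r, hr⟩ := SL.le_iff.1 hsuf
    have hrne : r ≠ [] := by
      rintro rfl
      rw [List.nil_append] at hr
      exact hne (SL.ext' hr.symm).symm
    cases hrl : r with
    | nil => exact absurd hrl hrne
    | cons y r' =>
      cases hsl : s.l with
      | nil => exact absurd hsl hs0
      | cons x s' =>
        rw [hrl, hsl] at hr
        have htform : t.l = y :: (r' ++ x :: s') := by rw [← hr]; simp
        have hpw : t.l.Pairwise (· < ·) := List.isChain_iff_pairwise.1 htc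
        rw [htform] at hpw
        have hyx : y < x := (List.pairwise_cons.1 hpw).1 x (by simp)
        have hgt : g t = tyin y := by show tyin t.l.headI = _; rw [htform, List.headI_cons]
        have hgs : g s = tyin x := by show tyin s.l.headI = _; rw [hsl, List.headI_cons]
        rw [hgt, hgs]
        exact (tyin_lt_tyin y x).2 hyx
  have hbP : ∀ t ∈ P, g t < ξ := fun t _ => tyin_lt_self t.l.headI
  have hWF : IsWFTree P := ⟨ξ, derivIter_eq_empty_of_bound hgP hbP⟩
  -- lower bound on membership in derivatives
  have hlow : ∀ ζ : Ordinal.{u}, ∀ s ∈ P, ζ ≤ g s → s ∈ derivIter P ζ := by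
    intro ζ
    induction ζ using Ordinal.induction with
    | h ζ IH =>
      intro s hs hζ
      rcases Ordinal.zero_or_succ_or_isSuccLimit ζ with rfl | ⟨ζ₀, rfl⟩ | hlim
      · rw [derivIter_zero]; exact hs
      · have hζ₀gl : ζ₀ < g s := lt_of_lt_of_le (Order.lt_succ ζ₀) hζ
        have hζ₀ξ : ζ₀ < ξ := lt_trans hζ₀gl (hbP s hs)
        set y := enm ζ₀ hζ₀ξ with hydef
        have hy : tyin y = ζ₀ := tyin_enm ζ₀ hζ₀ξ
        have hyl : y < s.l.headI := by
          rw [← tyin_lt_tyin, hy]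
          exact hζ₀gl
        have hs' : (⟨y :: s.l⟩ : SL β) ∈ P := by
          refine ⟨List.cons_ne_nil y s.l, List.isChain_cons.2 ⟨?_, hs.2⟩⟩
          intro z hz
          have hz' : z = s.l.headI := by
            cases hsl : s.l with
            | nil => rw [hsl] at hz; simp at hz
            | cons w l' => rw [hsl] at hz; simpa using hz.symm
          rw [hz']
          exact hyl
        have h1 : (⟨y :: s.l⟩ : SL β) ∈ derivIter P ζ₀ := by
          refine IH ζ₀ (Order.lt_succ ζ₀) _ hs' ?_
          have hgy : g (⟨y :: s.l⟩ : SL β) = ζ₀ := by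
            show tyin (y :: s.l).headI = ζ₀
            rw [List.headI_cons, hy]
          rw [hgy]
        have h2 : s ∈ derivIter P ζ₀ := IH ζ₀ (Order.lt_succ ζ₀) s hs hζ₀gl.le
        rw [derivIter_succ, mem_treeDeriv]
        refine ⟨h2, ⟨y :: s.l⟩, h1, ?_⟩
        rw [lt_iff_le_and_ne]
        refine ⟨SL.le_iff.2 ⟨[y], rfl⟩, fun hcon => ?_⟩
        have := congrArg (fun u : SL β => u.l.length) hcon
        simp at this
      · rw [derivIter_limit hlim]
        exact Set.mem_iInter.2 fun ζ' => IH ζ'.1 ζ'.2 s hs (le_trans ζ'.2.le hζ)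
  have hrank : treeRank P = ξ := by
    apply le_antisymm (treeRank_le (derivIter_eq_empty_of_bound hgP hbP))
    apply le_csInf ⟨ξ, derivIter_eq_empty_of_bound hgP hbP⟩
    intro ζ hζ
    by_contra hcon
    have hζξ : ζ < ξ := not_le.1 hcon
    have hmem : (⟨[enm ζ hζξ]⟩ : SL β) ∈ P :=
      ⟨List.cons_ne_nil _ _, List.isChain_singleton _⟩
    have : (⟨[enm ζ hζξ]⟩ : SL β) ∈ derivIter P ζ := by
      refine hlow ζ _ hmem ?_
      show ζ ≤ tyin ([enm ζ hζξ].headI)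
      rw [List.headI_cons, tyin_enm]
    rw [hζ] at this
    exact absurd this (Set.notMem_empty _)
  have hTree : IsTree P := by
    intro t _
    constructor
    · intro s hs s' hs' _
      exact List.suffix_or_suffix_of_suffix (SL.le_iff.1 hs.2) (SL.le_iff.1 hs'.2)
    · apply Set.Finite.wellFoundedOn
      apply Set.Finite.subset ((t.l.tails.finite_toSet).image (fun u => (⟨u⟩ : SL β)))
      intro s hs
      exact ⟨s.l, (List.mem_tails s.l t.l).2 (SL.le_iff.1 hs.2), rfl⟩
  -- the coloring
  obtain ⟨Q, hQP, hQrank, c, hcol⟩ := hRHS (SL β) P hTree hWF hrank 1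
    (fun s => if g s < a then (0 : Fin 2) else 1)
  rw [hrank] at hQrank
  have hgQ : ∀ s ∈ Q, ∀ t ∈ Q, s < t → g t < g s :=
    fun s hs t ht hst => hgP s (hQP hs) t (hQP ht) hst
  have hc2 : c = 0 ∨ c = 1 := by
    rcases c with ⟨cv, hcv⟩
    interval_cases cv
    · exact Or.inl rfl
    · exact Or.inr rfl
  rcases hc2 with rfl | rfl
  · -- all labels < a : rank Q ≤ a < ξ
    have hbound : ∀ t ∈ Q, g t < a := by
      intro t ht
      by_contra hna
      have := hcol t ht
      rw [if_neg hna] at this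
      exact absurd this (by decide)
    have hle : treeRank Q ≤ a := treeRank_le (derivIter_eq_empty_of_bound hgQ hbound)
    rw [hQrank] at hle
    exact absurd (lt_of_le_of_lt hle ha) (lt_irrefl ξ)
  · -- all labels ≥ a : use g - a, rank Q ≤ b' < ξ
    have hge : ∀ t ∈ Q, a ≤ g t := by
      intro t ht
      by_contra hna
      have := hcol t ht
      rw [if_pos (not_le.1 hna)] at this
      exact absurd this (by decide)
    have hgQ' : ∀ s ∈ Q, ∀ t ∈ Q, s < t → g t - a < g s - a := by
      intro s hs t ht hst
      have h1 : a + (g t - a) = g t := Ordinal.add_sub_cancel_of_le (hge t ht)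
      have h2 : a + (g s - a) = g s := Ordinal.add_sub_cancel_of_le (hge s hs)
      have h3 : g t < g s := hgQ s hs t ht hst
      rw [← h1, ← h2] at h3
      exact (add_lt_add_iff_left a).1 h3
    have hbound : ∀ t ∈ Q, g t - a < b' := by
      intro t ht
      have h1 : a + (g t - a) = g t := Ordinal.add_sub_cancel_of_le (hge t ht)
      have h2 : g t < a + b' := hξab ▸ hbP t (hQP ht)
      rw [← h1] at h2
      exact (add_lt_add_iff_left a).1 h2
    have hle : treeRank Q ≤ b' := treeRank_le (derivIter_eq_empty_of_bound hgQ' hbound)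
    rw [hQrank] at hle
    exact absurd (lt_of_le_of_lt hle hb') (lt_irrefl ξ)


/-- a nonzero ordinal `ξ` has the Ramsey property for singletons
(every finite coloring of a tree of rank `ξ` is constant on a subtree of full rank)
if and only if `ξ` is additively indecomposable. -/
theorem statement4 (ξ : Ordinal.{u}) (hξ : ξ ≠ 0) :
    (¬ ∃ a b : Ordinal.{u}, a < ξ ∧ b < ξ ∧ ξ ≤ a + b) ↔
      ∀ (α : Type u) [PartialOrder α] (P : Set α), IsTree P → IsWFTree P →
        treeRank P = ξ → ∀ (k : ℕ) (f : α → Fin (k + 1)),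
          ∃ Q ⊆ P, treeRank Q = treeRank P ∧
            ∃ c : Fin (k + 1), ∀ t ∈ Q, f t = c := by
  constructor
  · intro hLHS α _ P _ hWF hrank k f
    push_neg at hLHS
    have hp : ∀ x < ξ, ∀ y < ξ, x + y < ξ := fun x hx y hy => hLHS x y hx hy
    exact forward_dir hξ hp hWF hrank k f
  · intro hRHS
    by_contra hex
    exact backward_dir hξ hex hRHS
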